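/- arXiv:2211.03864 — 4 statements merged into one kernel-verified Lean document; each statement's English description precedes it below -/
import Mathlib

section
/- Let M be a 2W×2W complex matrix satisfying Mᵀ J M = J, where J is the 2W×2W block matrix [[0, −1], [1, 0]]. Then M is invertible, every eigenvalue of Mᴴ M is a nonzero (positive real) number, and the spectrum of Mᴴ M is invariant under inversion: λ belongs to the spectrum of Mᴴ M if and only if λ⁻¹ does. -/
open Matrix

noncomputable section

/-- The standard symplectic form `J = [[0, -1], [1, 0]]` (W×W blocks). -/
def symJ (W : ℕ) : Matrix (Fin W ⊕ Fin W) (Fin W ⊕ Fin W) ℂ :=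
  Matrix.fromBlocks 0 (-1) 1 0

lemma symJ_mul_symJ (W : ℕ) : symJ W * symJ W = -1 := by
  simp [symJ, Matrix.fromBlocks_multiply, ← Matrix.fromBlocks_one,
    Matrix.fromBlocks_neg]

lemma symJ_conjTranspose (W : ℕ) : (symJ W)ᴴ = -(symJ W) := by
  simp [symJ, Matrix.fromBlocks_conjTranspose, Matrix.fromBlocks_neg]

lemma mem_spectrum_iff_det {n : Type*} [Fintype n] [DecidableEq n] (A : Matrix n n ℂ)
    (z : ℂ) : z ∈ spectrum ℂ A ↔ (algebraMap ℂ (Matrix n n ℂ) z - A).det = 0 := by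
  rw [spectrum.mem_iff, Matrix.isUnit_iff_isUnit_det, isUnit_iff_ne_zero, not_not]

lemma my_spectrum_diagonal {n : Type*} [Fintype n] [DecidableEq n] (d : n → ℂ) :
    spectrum ℂ (Matrix.diagonal d) = Set.range d := by
  ext z
  rw [mem_spectrum_iff_det, Matrix.algebraMap_eq_diagonal, Matrix.diagonal_sub,
    Matrix.det_diagonal]
  rw [Finset.prod_eq_zero_iff]
  constructor
  · rintro ⟨i, -, hi⟩
    exact ⟨i, by have := sub_eq_zero.mp hi; simp_all [Pi.algebraMap_apply]⟩
  · rintro ⟨i, hi⟩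
    exact ⟨i, Finset.mem_univ i, by simp [Pi.algebraMap_apply, hi]⟩

lemma spectrum_transpose {n : Type*} [Fintype n] [DecidableEq n] (A : Matrix n n ℂ) :
    spectrum ℂ Aᵀ = spectrum ℂ A := by
  ext z
  rw [mem_spectrum_iff_det, mem_spectrum_iff_det]
  have : (algebraMap ℂ (Matrix n n ℂ) z - Aᵀ) = (algebraMap ℂ (Matrix n n ℂ) z - A)ᵀ := by
    rw [Matrix.transpose_sub]
    congr 1
    simp [Matrix.algebraMap_eq_diagonal]
  rw [this, Matrix.det_transpose]

lemma spectrum_hermitian {n : Type*} [Fintype n] [DecidableEq n] {A : Matrix n n ℂ}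
    (hA : A.IsHermitian) :
    spectrum ℂ A = Set.range (fun i => (hA.eigenvalues i : ℂ)) := by
  conv_lhs => rw [hA.spectral_theorem, Unitary.conjStarAlgAut_apply]
  have huni : (↑hA.eigenvectorUnitary : Matrix n n ℂ) *
      Matrix.diagonal (RCLike.ofReal ∘ hA.eigenvalues) * star (↑hA.eigenvectorUnitary : Matrix n n ℂ)
      = ((Unitary.toUnits hA.eigenvectorUnitary : (Matrix n n ℂ)ˣ) : Matrix n n ℂ) *
        Matrix.diagonal (RCLike.ofReal ∘ hA.eigenvalues) *
        (((Unitary.toUnits hA.eigenvectorUnitary)⁻¹ : (Matrix n n ℂ)ˣ) : Matrix n n ℂ) := rfl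
  rw [huni, spectrum.units_conjugate, my_spectrum_diagonal]
  rfl

theorem stmt1 (W : ℕ) (M : Matrix (Fin W ⊕ Fin W) (Fin W ⊕ Fin W) ℂ)
    (h : Mᵀ * symJ W * M = symJ W) :
    IsUnit M ∧
    (∀ lam ∈ spectrum ℂ (Mᴴ * M), ∃ t : ℝ, 0 < t ∧ lam = (t : ℂ)) ∧
    (∀ lam : ℂ, lam ∈ spectrum ℂ (Mᴴ * M) ↔ lam⁻¹ ∈ spectrum ℂ (Mᴴ * M)) := by
  set J := symJ W with hJdef
  have hJJ : J * J = -1 := symJ_mul_symJ W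
  have hJH : Jᴴ = -J := symJ_conjTranspose W
  set L : Matrix (Fin W ⊕ Fin W) (Fin W ⊕ Fin W) ℂ := -J * Mᵀ * J with hLdef
  have hLM : L * M = 1 := by
    have : L * M = -(J * (Mᵀ * J * M)) := by
      simp [hLdef, mul_assoc]
    rw [this, h, hJJ, neg_neg]
  have hML : M * L = 1 := mul_eq_one_comm.mp hLM
  have hMunit : IsUnit M := ⟨⟨M, L, hML, hLM⟩, rfl⟩
  set A : Matrix (Fin W ⊕ Fin W) (Fin W ⊕ Fin W) ℂ := Mᴴ * M with hAdef
  have hAH : A.IsHermitian := Matrix.isHermitian_conjTranspose_mul_self M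
  have hAB : A * (L * Lᴴ) = 1 := by
    have : A * (L * Lᴴ) = Mᴴ * (M * L) * Lᴴ := by
      simp [hAdef, mul_assoc]
    rw [this, hML, mul_one, ← Matrix.conjTranspose_mul, hLM, Matrix.conjTranspose_one]
  have hBA : (L * Lᴴ) * A = 1 := mul_eq_one_comm.mp hAB
  have hAunit : IsUnit A := ⟨⟨A, L * Lᴴ, hAB, hBA⟩, rfl⟩
  -- the unit A with inverse L * Lᴴ
  set uA : (Matrix (Fin W ⊕ Fin W) (Fin W ⊕ Fin W) ℂ)ˣ :=
    ⟨A, L * Lᴴ, hAB, hBA⟩ with huA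
  -- the unit J with inverse -J
  set uJ : (Matrix (Fin W ⊕ Fin W) (Fin W ⊕ Fin W) ℂ)ˣ :=
    ⟨J, -J, by rw [mul_neg, hJJ, neg_neg], by rw [neg_mul, hJJ, neg_neg]⟩ with huJ
  -- compute L * Lᴴ = -J * Aᵀ * J
  have hJJ' : ∀ X : Matrix (Fin W ⊕ Fin W) (Fin W ⊕ Fin W) ℂ,
      J * (J * X) = -X := fun X => by rw [← mul_assoc, hJJ, neg_one_mul]
  have hB : L * Lᴴ = -J * Aᵀ * J := by
    have hLH : Lᴴ = -J * (Mᵀ)ᴴ * J := by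
      simp only [hLdef, Matrix.conjTranspose_mul, Matrix.conjTranspose_neg, hJH, neg_neg,
        neg_mul, mul_neg, mul_assoc]
    rw [hLH, hLdef]
    have hAT : Aᵀ = Mᵀ * (Mᵀ)ᴴ := by
      simp [hAdef, Matrix.transpose_mul, Matrix.conjTranspose, Matrix.transpose_map]
    rw [hAT]
    simp only [neg_mul, mul_neg, neg_neg, mul_assoc, hJJ']
  -- hence spectrum of the inverse is the spectrum of A
  have hspecB : spectrum ℂ (L * Lᴴ) = spectrum ℂ A := by
    have : L * Lᴴ = ((uJ⁻¹ : (Matrix (Fin W ⊕ Fin W) (Fin W ⊕ Fin W) ℂ)ˣ) : Matrix (Fin W ⊕ Fin W) (Fin W ⊕ Fin W) ℂ) * Aᵀ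
        * ((uJ : (Matrix (Fin W ⊕ Fin W) (Fin W ⊕ Fin W) ℂ)ˣ) : Matrix (Fin W ⊕ Fin W) (Fin W ⊕ Fin W) ℂ) := by
      rw [hB]; rfl
    rw [this, spectrum.units_conjugate', spectrum_transpose]
  have hspec := spectrum_hermitian hAH
  -- positivity of eigenvalues
  have heigpos : ∀ i, 0 < hAH.eigenvalues i := by
    intro i
    have hnonneg : 0 ≤ hAH.eigenvalues i :=
      Matrix.eigenvalues_conjTranspose_mul_self_nonneg M i
    rcases hnonneg.lt_or_eq with hlt | heq
    · exact hlt
    · exfalso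
      have h0 : (0 : ℂ) ∈ spectrum ℂ A := by
        rw [hspec]
        refine ⟨i, ?_⟩
        show ((hAH.eigenvalues i : ℝ) : ℂ) = 0
        rw [← heq]; norm_num
      exact (spectrum.zero_mem_iff ℂ).mp h0 hAunit
  refine ⟨hMunit, ?_, ?_⟩
  · intro lam hlam
    rw [hspec] at hlam
    obtain ⟨i, hi⟩ := hlam
    exact ⟨hAH.eigenvalues i, heigpos i, hi.symm⟩
  · -- one direction suffices
    have key : ∀ lam : ℂ, lam ∈ spectrum ℂ A → lam⁻¹ ∈ spectrum ℂ A := by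
      intro lam hlam
      have hne : lam ≠ 0 := by
        intro h0
        rw [h0] at hlam
        exact (spectrum.zero_mem_iff ℂ).mp hlam hAunit
      have := (spectrum.inv_mem_iff (r := Units.mk0 lam hne) (a := uA)).mp hlam
      rw [← hspecB]
      exact this
    intro lam
    constructor
    · exact key lam
    · intro hlam
      have := key _ hlam
      rwa [inv_inv] at this
end
end

section
/- Let W ≥ 1, let V be a real symmetric W×W matrix, let R ≥ 16 and θ ∈ ℝ with |sin θ| ≥ R^{−1/2}, and set z = R e^{iθ}. Let a, b ∈ ℂ^W satisfy ‖b‖ ≤ 2 R^{−1/2} ‖a‖ (Euclidean norms), and define a′ = (z·1 − V) a − b and b′ = a. Then ‖b′‖ ≤ 2 R^{−1/2} ‖a′‖ and ‖a′‖ ≥ min( R − 2√R , (R |sin θ|)/2 ) · ‖a‖. In other words, the cone {(a,b) ∈ ℂ^{2W} : ‖b‖ ≤ 2R^{−1/2}‖a‖} is preserved by the transfer matrix [[z·1 − V, −1],[1, 0]], and the norm of the first coordinate is multiplied by at least min(R − 2√R, R|sin θ|/2). -/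
open Matrix

noncomputable section

lemma stmt4_arith_aux {r s x y : ℝ} (hr4 : 4 ≤ r) (hs0 : 0 ≤ s) (hsr : 1 ≤ s * r)
    (hx : 0 ≤ x) (hy : (r * r * s - 2 / r) * x ≤ y) :
    r * r * s / 2 * x ≤ y ∧ x * r ≤ 2 * y := by
  have hr0 : (0:ℝ) < r := by linarith
  have h1 : 2 / r ≤ r * r * s / 2 := by
    rw [div_le_div_iff₀ hr0 two_pos]
    nlinarith
  have hA : r * r * s / 2 * x ≤ y := by
    nlinarith [mul_nonneg (sub_nonneg.mpr h1) hx]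
  refine ⟨hA, ?_⟩
  nlinarith [mul_nonneg (mul_nonneg hr0.le (sub_nonneg.mpr hsr)) hx]

theorem stmt4 {W : ℕ} (hW : 1 ≤ W) (V : Matrix (Fin W) (Fin W) ℝ) (hV : V.IsSymm)
    (R θ : ℝ) (hR : 16 ≤ R) (hθ : 1 / Real.sqrt R ≤ |Real.sin θ|)
    (z : ℂ) (hz : z = (R : ℂ) * Complex.exp ((θ : ℂ) * Complex.I))
    (a b : EuclideanSpace ℂ (Fin W)) (hab : ‖b‖ ≤ 2 / Real.sqrt R * ‖a‖)
    (a' b' : EuclideanSpace ℂ (Fin W))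
    (ha' : a' = Matrix.toEuclideanLin
      (z • (1 : Matrix (Fin W) (Fin W) ℂ) - V.map (Complex.ofReal ·)) a - b)
    (hb' : b' = a) :
    ‖b'‖ ≤ 2 / Real.sqrt R * ‖a'‖ ∧
    min (R - 2 * Real.sqrt R) (R * |Real.sin θ| / 2) * ‖a‖ ≤ ‖a'‖ := by
  have hR0 : (0:ℝ) < R := by linarith
  set r := Real.sqrt R with hrdef
  have hr4 : (4:ℝ) ≤ r := by
    have : Real.sqrt 16 ≤ r := Real.sqrt_le_sqrt hR
    rwa [show (16:ℝ) = 4 ^ 2 by norm_num, Real.sqrt_sq (by norm_num : (0:ℝ) ≤ 4)] at this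
  have hr0 : (0:ℝ) < r := by linarith
  have hRr : r * r = R := Real.mul_self_sqrt hR0.le
  set s := |Real.sin θ| with hsdef
  have hs0 : 0 ≤ s := abs_nonneg _
  have hsr : 1 ≤ s * r := by
    have := (div_le_iff₀ hr0).mp hθ
    linarith
  -- Hermitian
  have hHerm : (V.map (Complex.ofReal ·)).IsHermitian := by
    have h : (V.map (Complex.ofReal ·))ᴴ = V.map (Complex.ofReal ·) := by
      ext i j
      simp only [Matrix.conjTranspose_apply, Matrix.map_apply, RCLike.star_def,
        Complex.conj_ofReal]
      exact congrArg Complex.ofReal (congrFun (congrFun hV i) j)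
    exact h
  have hsym := Matrix.isHermitian_iff_isSymmetric.mp hHerm
  set T := Matrix.toEuclideanLin (V.map (Complex.ofReal ·)) with hT
  have ha'2 : a' = (z • a - T a) - b := by
    rw [ha', hT]
    congr 1
    simp [map_sub, _root_.map_smul, Matrix.toEuclideanLin_apply]
  set u : EuclideanSpace ℂ (Fin W) := z • a - T a with hu
  -- inner product computation
  have hinner : (inner ℂ a u : ℂ).im = z.im * ‖a‖ ^ 2 := by
    have hTa : (inner ℂ a (T a) : ℂ).im = 0 := by
      have h1 : (starRingEnd ℂ) (inner ℂ a (T a) : ℂ) = inner ℂ a (T a) := by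
        rw [inner_conj_symm]
        exact hsym a a
      exact Complex.conj_eq_iff_im.mp h1
    rw [hu, inner_sub_right, inner_smul_right, inner_self_eq_norm_sq_to_K, Complex.sub_im,
      hTa, sub_zero, Complex.mul_im]
    simp [← Complex.ofReal_pow]
  have hzim : z.im = R * Real.sin θ := by
    rw [hz, Complex.exp_mul_I]
    simp [Complex.add_im, Complex.mul_im, Complex.cos_ofReal_re, Complex.sin_ofReal_re]
  -- lower bound on ‖u‖
  have hub : R * s * ‖a‖ ≤ ‖u‖ := by
    have h1 : |(inner ℂ a u : ℂ).im| ≤ ‖a‖ * ‖u‖ := by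
      calc |(inner ℂ a u : ℂ).im| ≤ ‖(inner ℂ a u : ℂ)‖ := Complex.abs_im_le_norm _
        _ = ‖(inner ℂ a u : ℂ)‖ := rfl
        _ ≤ ‖a‖ * ‖u‖ := norm_inner_le_norm a u
    rw [hinner, hzim] at h1
    have h2 : |R * Real.sin θ * ‖a‖ ^ 2| = R * s * ‖a‖ ^ 2 := by
      rw [abs_mul, abs_mul, abs_of_pos hR0, abs_of_nonneg (by positivity : (0:ℝ) ≤ ‖a‖ ^ 2)]
    rw [h2] at h1
    rcases eq_or_lt_of_le (norm_nonneg a) with h | h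
    · rw [← h]; simp [norm_nonneg]
    · nlinarith [norm_nonneg u]
  -- lower bound on ‖a'‖
  have h2 : ‖u‖ - ‖b‖ ≤ ‖a'‖ := by
    rw [ha'2]
    exact norm_sub_norm_le u b
  have hlb : (r * r * s - 2 / r) * ‖a‖ ≤ ‖a'‖ := by
    rw [hRr]
    nlinarith
  obtain ⟨hA, hB⟩ := stmt4_arith_aux hr4 hs0 hsr (norm_nonneg a) hlb
  rw [hRr] at hA
  constructor
  · rw [hb', div_mul_eq_mul_div, le_div_iff₀ hr0]
    linarith
  · calc min (R - 2 * r) (R * s / 2) * ‖a‖ ≤ R * s / 2 * ‖a‖ :=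
        mul_le_mul_of_nonneg_right (min_le_right _ _) (norm_nonneg a)
      _ ≤ ‖a'‖ := hA
end
end

section
/- Let μ be a probability measure on ℂ such that ∫ log₊ |w| dμ(w) < ∞ and such that for every z ∈ ℂ the logarithmic potential satisfies ∫ log |z − w| dμ(w) ≥ 0 (in particular the integral is well defined and > −∞). Then there exists a constant C < ∞ such that for every z ∈ ℂ and every r ∈ (0, 1/e], μ(B(z, r)) · log(1/r) ≤ C (1 + log₊ |z|), where B(z,r) is the ball of radius r centred at z. -/
open MeasureTheory

noncomputable section

lemma log_plus_eq (a : ℝ) (ha : 0 ≤ a) :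
    max (Real.log a) 0 = Real.log (max a 1) := by
  rcases le_or_gt a 1 with h | h
  · rw [max_eq_right (Real.log_nonpos ha h), max_eq_right h, Real.log_one]
  · rw [max_eq_left (Real.log_nonneg h.le), max_eq_left h.le]

lemma key_ptwise (z w : ℂ) :
    max (Real.log (‖z - w‖)) 0 ≤
      Real.log 2 + max (Real.log (‖z‖)) 0 + max (Real.log (‖w‖)) 0 := by
  rw [log_plus_eq _ (norm_nonneg _), log_plus_eq _ (norm_nonneg _),
    log_plus_eq _ (norm_nonneg _)]
  set x := max (‖z‖) 1 with hx
  set y := max (‖w‖) 1 with hy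
  have hx1 : 1 ≤ x := le_max_right _ _
  have hy1 : 1 ≤ y := le_max_right _ _
  have hc : max (‖z - w‖) 1 ≤ 2 * x * y := by
    have h1 : ‖z - w‖ ≤ ‖z‖ + ‖w‖ := by
      simpa [sub_eq_add_neg] using norm_add_le z (-w)
    have h2 : ‖z‖ ≤ x := le_max_left _ _
    have h3 : ‖w‖ ≤ y := le_max_left _ _
    have : x + y ≤ 2 * x * y := by nlinarith
    refine max_le (by linarith) (by nlinarith)
  calc Real.log (max (‖z - w‖) 1) ≤ Real.log (2 * x * y) :=
        Real.log_le_log (by positivity) hc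
    _ = Real.log 2 + Real.log x + Real.log y := by
        rw [Real.log_mul (by positivity) (by positivity),
          Real.log_mul (by norm_num) (by positivity)]

lemma int_bound (μ : Measure ℂ) [IsProbabilityMeasure μ]
    (h1 : Integrable (fun w => max (Real.log (‖w‖)) 0) μ)
    (h2 : ∀ z : ℂ, Integrable (fun w => Real.log (‖z - w‖)) μ) (z : ℂ) :
    ∫ w, max (Real.log (‖z - w‖)) 0 ∂μ ≤
      Real.log 2 + max (Real.log (‖z‖)) 0 +
        ∫ w, max (Real.log (‖w‖)) 0 ∂μ := by
  have hb : Integrable (fun w => Real.log 2 + max (Real.log (‖z‖)) 0 +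
      max (Real.log (‖w‖)) 0) μ := (integrable_const _).add h1
  have hi : Integrable (fun w => max (Real.log (‖z - w‖)) 0) μ := (h2 z).pos_part
  calc ∫ w, max (Real.log (‖z - w‖)) 0 ∂μ
      ≤ ∫ w, (Real.log 2 + max (Real.log (‖z‖)) 0 +
          max (Real.log (‖w‖)) 0) ∂μ :=
        integral_mono hi hb (fun w => key_ptwise z w)
    _ = Real.log 2 + max (Real.log (‖z‖)) 0 +
          ∫ w, max (Real.log (‖w‖)) 0 ∂μ := by
        rw [integral_add (integrable_const _) h1, integral_const]
        simp

lemma no_atom (μ : Measure ℂ) [IsProbabilityMeasure μ]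
    (h1 : Integrable (fun w => max (Real.log (‖w‖)) 0) μ)
    (h2 : ∀ z : ℂ, Integrable (fun w => Real.log (‖z - w‖)) μ)
    (h3 : ∀ z : ℂ, 0 ≤ ∫ w, Real.log (‖z - w‖) ∂μ) (z₀ : ℂ) :
    μ {z₀} = 0 := by
  by_contra hne
  set p : ℝ := (μ {z₀}).toReal with hp
  have hpfin : μ {z₀} ≠ ⊤ := measure_ne_top μ _
  have hppos : 0 < p := ENNReal.toReal_pos hne hpfin
  set I : ℝ := ∫ w, max (Real.log (‖w‖)) 0 ∂μ with hI
  have hInn : 0 ≤ I := integral_nonneg (fun w => le_max_right _ _)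
  set K : ℝ := Real.log 2 + max (Real.log (‖z₀‖ + 1)) 0 + I with hK
  have hKnn : 0 ≤ K := by
    have : (0:ℝ) ≤ Real.log 2 := Real.log_nonneg (by norm_num)
    have : (0:ℝ) ≤ max (Real.log (‖z₀‖ + 1)) 0 := le_max_right _ _
    positivity
  set t : ℝ := Real.exp (-(K + 1) / p) with ht
  have htpos : 0 < t := Real.exp_pos _
  have hlogt : Real.log t = -(K + 1) / p := Real.log_exp _
  have ht1 : t ≤ 1 := by
    rw [ht]
    apply Real.exp_le_one_iff.mpr
    have : -(K + 1) / p ≤ 0 := div_nonpos_of_nonpos_of_nonneg (by linarith) hppos.le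
    linarith
  set z : ℂ := z₀ + (t : ℂ) with hz
  have habs : ‖z - z₀‖ = t := by
    simp [hz, Complex.norm_real, Real.norm_eq_abs, abs_of_pos htpos]
  -- bound log₊ |z|
  have hzb : max (Real.log (‖z‖)) 0 ≤ max (Real.log (‖z₀‖ + 1)) 0 := by
    apply max_le_max _ le_rfl
    have h0 : (0:ℝ) < ‖z₀‖ + 1 := by positivity
    rcases eq_or_ne (‖z‖) 0 with hz0 | hz0
    · rw [hz0, Real.log_zero]; exact Real.log_nonneg (by linarith [norm_nonneg z₀]) |>.trans' le_rfl
    apply Real.log_le_log (lt_of_le_of_ne (norm_nonneg z) (Ne.symm hz0))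
    calc ‖z‖ ≤ ‖z₀‖ + ‖(t:ℂ)‖ := norm_add_le _ _
      _ ≤ ‖z₀‖ + 1 := by
          rw [Complex.norm_real, Real.norm_eq_abs, abs_of_pos htpos]; linarith
  have hs : MeasurableSet ({z₀} : Set ℂ) := measurableSet_singleton _
  have hsplit := integral_add_compl hs (h2 z)
  have hsingle : ∫ w in ({z₀} : Set ℂ), Real.log (‖z - w‖) ∂μ = p * Real.log t := by
    rw [setIntegral_congr_fun hs (g := fun _ => Real.log t)
      (fun w hw => by simp only [Set.mem_singleton_iff] at hw; rw [hw, habs]),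
      setIntegral_const, smul_eq_mul, Measure.real]
  have hcompl : ∫ w in ({z₀} : Set ℂ)ᶜ, Real.log (‖z - w‖) ∂μ ≤ K := by
    have step1 : ∫ w in ({z₀} : Set ℂ)ᶜ, Real.log (‖z - w‖) ∂μ ≤
        ∫ w in ({z₀} : Set ℂ)ᶜ, max (Real.log (‖z - w‖)) 0 ∂μ :=
      setIntegral_mono ((h2 z).integrableOn) ((h2 z).pos_part.integrableOn)
        (fun w => le_max_left _ _)
    have step2 : ∫ w in ({z₀} : Set ℂ)ᶜ, max (Real.log (‖z - w‖)) 0 ∂μ ≤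
        ∫ w, max (Real.log (‖z - w‖)) 0 ∂μ :=
      setIntegral_le_integral (h2 z).pos_part
        (Filter.Eventually.of_forall (fun w => le_max_right _ _))
    have step3 := int_bound μ h1 h2 z
    calc _ ≤ _ := step1
      _ ≤ _ := step2
      _ ≤ Real.log 2 + max (Real.log (‖z‖)) 0 + I := step3
      _ ≤ K := by rw [hK]; linarith
  have h0 := h3 z
  rw [← hsplit, hsingle] at h0
  have : p * Real.log t = -(K + 1) := by
    rw [hlogt]; field_simp
  rw [this] at h0
  linarith

theorem stmt14 (μ : Measure ℂ) [IsProbabilityMeasure μ]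
    (h1 : Integrable (fun w => max (Real.log (‖w‖)) 0) μ)
    (h2 : ∀ z : ℂ, Integrable (fun w => Real.log (‖z - w‖)) μ)
    (h3 : ∀ z : ℂ, 0 ≤ ∫ w, Real.log (‖z - w‖) ∂μ) :
    ∃ C : ℝ, ∀ z : ℂ, ∀ r : ℝ, 0 < r → r ≤ (Real.exp 1)⁻¹ →
      (μ (Metric.ball z r)).toReal * Real.log (1 / r) ≤
        C * (1 + max (Real.log (‖z‖)) 0) := by
  set I : ℝ := ∫ w, max (Real.log (‖w‖)) 0 ∂μ with hI
  have hInn : 0 ≤ I := integral_nonneg (fun w => le_max_right _ _)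
  refine ⟨max 1 (Real.log 2 + I), fun z r hr hre => ?_⟩
  set C := max 1 (Real.log 2 + I) with hC
  have hC1 : (1:ℝ) ≤ C := le_max_left _ _
  have hC2 : Real.log 2 + I ≤ C := le_max_right _ _
  set B := Metric.ball z r with hB
  have hBm : MeasurableSet B := measurableSet_ball
  have hmuB : (μ B).toReal ≤ 1 := by
    simpa using ENNReal.toReal_mono ENNReal.one_ne_top prob_le_one
  have hsplit := integral_add_compl hBm (h2 z)
  -- on ball: log |z - w| ≤ log r a.e.
  have hae : ∀ᵐ w ∂(μ.restrict B), Real.log (‖z - w‖) ≤ Real.log r := by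
    have hz0 : μ {z} = 0 := no_atom μ h1 h2 h3 z
    rw [ae_iff, Measure.restrict_apply' hBm]
    refine measure_mono_null ?_ hz0
    rintro w ⟨hw1, hw2⟩
    simp only [Set.mem_setOf_eq, not_le] at hw1
    simp only [Set.mem_singleton_iff]
    by_contra hwz
    have hlt : ‖z - w‖ < r := by
      rw [hB, Metric.mem_ball, Complex.dist_eq] at hw2
      rwa [← norm_neg, neg_sub] at hw2
    have hpos : 0 < ‖z - w‖ :=
      norm_pos_iff.mpr (sub_ne_zero.mpr (Ne.symm hwz))
    exact absurd (Real.log_le_log hpos hlt.le) (not_le.mpr hw1)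
  have hball : ∫ w in B, Real.log (‖z - w‖) ∂μ ≤ (μ B).toReal * Real.log r := by
    calc ∫ w in B, Real.log (‖z - w‖) ∂μ
        ≤ ∫ _ in B, Real.log r ∂μ :=
          integral_mono_ae ((h2 z).integrableOn) (integrable_const _) hae
      _ = (μ B).toReal * Real.log r := by rw [setIntegral_const, smul_eq_mul, Measure.real]
  set L : ℝ := max (Real.log (‖z‖)) 0 with hL
  have hLnn : 0 ≤ L := le_max_right _ _
  have hcompl : ∫ w in Bᶜ, Real.log (‖z - w‖) ∂μ ≤ Real.log 2 + L + I := by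
    have step1 : ∫ w in Bᶜ, Real.log (‖z - w‖) ∂μ ≤
        ∫ w in Bᶜ, max (Real.log (‖z - w‖)) 0 ∂μ :=
      setIntegral_mono ((h2 z).integrableOn) ((h2 z).pos_part.integrableOn)
        (fun w => le_max_left _ _)
    have step2 : ∫ w in Bᶜ, max (Real.log (‖z - w‖)) 0 ∂μ ≤
        ∫ w, max (Real.log (‖z - w‖)) 0 ∂μ :=
      setIntegral_le_integral (h2 z).pos_part
        (Filter.Eventually.of_forall (fun w => le_max_right _ _))
    have step3 := int_bound μ h1 h2 z
    calc _ ≤ _ := step1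
      _ ≤ _ := step2
      _ ≤ Real.log 2 + L + I := step3
  have h0 := h3 z
  rw [← hsplit] at h0
  have key : (μ B).toReal * (- Real.log r) ≤ Real.log 2 + L + I := by nlinarith
  have hrw : Real.log (1 / r) = - Real.log r := by
    rw [one_div, Real.log_inv]
  rw [hrw]
  have hCL : L ≤ C * L := le_mul_of_one_le_left hLnn hC1
  calc (μ B).toReal * (- Real.log r) ≤ Real.log 2 + L + I := key
    _ ≤ C + C * L := by linarith
    _ = C * (1 + L) := by ring
end
end

section
/- Let ρ : [0, ∞) → [0, ∞) be non-decreasing with ρ(0) = 0 and ∫₀¹ (ρ(t)/t) dt < ∞. Then for all constants c > 0 and τ > 0, the series ∑_{i=1}^{∞} e^{τ i} · ρ( exp(−c e^{τ i}) ) converges. -/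
open MeasureTheory

theorem stmt16 (ρ : ℝ → ℝ)
    (hmono : ∀ s t : ℝ, 0 ≤ s → s ≤ t → ρ s ≤ ρ t)
    (h0 : ρ 0 = 0) (hnn : ∀ t : ℝ, 0 ≤ t → 0 ≤ ρ t)
    (hdini : IntegrableOn (fun t => ρ t / t) (Set.Ioc (0:ℝ) 1)) :
    ∀ c τ : ℝ, 0 < c → 0 < τ →
      Summable (fun i : ℕ =>
        Real.exp (τ * i) * ρ (Real.exp (-c * Real.exp (τ * i)))) := by
  intro c τ hc hτ
  set b : ℕ → ℝ := fun i => Real.exp (-c * Real.exp (τ * i)) with hb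
  have hbpos : ∀ i, 0 < b i := fun i => Real.exp_pos _
  have hble1 : ∀ i, b i ≤ 1 := by
    intro i
    apply Real.exp_le_one_iff.mpr
    have : 0 < Real.exp (τ * i) := Real.exp_pos _
    nlinarith
  have hbanti : ∀ i, b (i + 1) ≤ b i := by
    intro i
    apply Real.exp_le_exp.mpr
    have h1 : Real.exp (τ * i) ≤ Real.exp (τ * (i + 1 : ℕ)) := by
      apply Real.exp_le_exp.mpr; push_cast; nlinarith
    nlinarith
  have hbanti' : Antitone b := antitone_nat_of_succ_le hbanti
  have hsub : ∀ i, Set.Ioc (b (i + 1)) (b i) ⊆ Set.Ioc (0:ℝ) 1 :=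
    fun i => Set.Ioc_subset_Ioc (hbpos _).le (hble1 _)
  have hInt : ∀ i, IntegrableOn (fun t => ρ t / t) (Set.Ioc (b (i + 1)) (b i)) :=
    fun i => hdini.mono_set (hsub i)
  set g : ℕ → ℝ := fun i => ∫ t in Set.Ioc (b (i + 1)) (b i), ρ t / t with hg
  have hfnn : ∀ t ∈ Set.Ioc (0:ℝ) 1, 0 ≤ ρ t / t := by
    intro t ht
    exact div_nonneg (hnn t ht.1.le) ht.1.le
  have hgnn : ∀ i, 0 ≤ g i := by
    intro i
    apply setIntegral_nonneg measurableSet_Ioc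
    intro t ht
    exact hfnn t (hsub i ht)
  have hinterval : ∀ k, IntervalIntegrable (fun t => ρ t / t) volume (b k) (b (k + 1)) := by
    intro k
    rw [intervalIntegrable_iff, Set.uIoc_of_ge (hbanti k)]
    exact hInt k
  -- summability of g via bounded partial sums
  have hgsum : Summable g := by
    apply summable_of_sum_range_le hgnn (c := ∫ t in Set.Ioc (0:ℝ) 1, ρ t / t)
    intro n
    have htel : ∑ k ∈ Finset.range n, ∫ t in (b k)..(b (k + 1)), ρ t / t
        = ∫ t in (b 0)..(b n), ρ t / t :=
      intervalIntegral.sum_integral_adjacent_intervals (fun k _ => hinterval k)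
    have hgk : ∀ k, g k = -∫ t in (b k)..(b (k + 1)), ρ t / t := by
      intro k
      rw [intervalIntegral.integral_symm, intervalIntegral.integral_of_le (hbanti k)]
      ring
    have : ∑ k ∈ Finset.range n, g k
        = ∫ t in Set.Ioc (b n) (b 0), ρ t / t := by
      simp only [hgk]
      rw [Finset.sum_neg_distrib, htel, intervalIntegral.integral_symm,
        intervalIntegral.integral_of_le (hbanti' (Nat.zero_le n))]
      ring
    rw [this]
    apply setIntegral_mono_set hdini
    · exact (ae_restrict_iff' measurableSet_Ioc).mpr
        (Filter.Eventually.of_forall hfnn)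
    · exact Filter.Eventually.of_forall
        (Set.Ioc_subset_Ioc (hbpos n).le (hble1 0))
  -- key estimate
  have heτ : (1:ℝ) < Real.exp τ := by
    rw [← Real.exp_zero]; exact Real.exp_lt_exp.mpr hτ
  set K : ℝ := Real.exp τ / (c * (Real.exp τ - 1)) with hK
  have hKpos : 0 < K := by
    apply div_pos (Real.exp_pos _)
    nlinarith
  have hkey : ∀ i : ℕ, Real.exp (τ * (i + 1 : ℕ)) * ρ (b (i + 1)) ≤ K * g i := by
    intro i
    -- lower bound g i by ρ (b (i+1)) * (log (b i) - log (b (i+1)))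
    have hlow : ρ (b (i + 1)) * (Real.log (b i) - Real.log (b (i + 1))) ≤ g i := by
      have hconst : IntegrableOn (fun t => ρ (b (i + 1)) / t)
          (Set.Ioc (b (i + 1)) (b i)) := by
        have hcont : ContinuousOn (fun t => ρ (b (i + 1)) / t)
            (Set.Icc (b (i + 1)) (b i)) := by
          apply ContinuousOn.div continuousOn_const continuousOn_id
          intro t ht
          exact ne_of_gt (lt_of_lt_of_le (hbpos (i + 1)) ht.1)
        exact hcont.integrableOn_Icc.mono_set Set.Ioc_subset_Icc_self
      have hmono' : ∀ t ∈ Set.Ioc (b (i + 1)) (b i),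
          ρ (b (i + 1)) / t ≤ ρ t / t := by
        intro t ht
        have htpos : 0 < t := lt_of_lt_of_le (hbpos (i + 1)) ht.1.le
        apply div_le_div_of_nonneg_right (hmono _ _ (hbpos (i + 1)).le ht.1.le) htpos.le
          |>.trans_eq rfl |>.trans_eq rfl
      have := setIntegral_mono_on hconst (hInt i) measurableSet_Ioc hmono'
      calc ρ (b (i + 1)) * (Real.log (b i) - Real.log (b (i + 1)))
          = ∫ t in Set.Ioc (b (i + 1)) (b i), ρ (b (i + 1)) / t := by
            rw [← intervalIntegral.integral_of_le (hbanti i)]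
            have h0notin : (0:ℝ) ∉ Set.uIcc (b (i + 1)) (b i) := by
              intro h
              rcases Set.mem_uIcc.mp h with h' | h'
              · exact absurd h'.1 (not_le.mpr (hbpos (i + 1)))
              · exact absurd h'.1 (not_le.mpr (hbpos i))
            simp only [div_eq_mul_inv]
            rw [intervalIntegral.integral_const_mul]
            rw [integral_inv h0notin]
            rw [Real.log_div (ne_of_gt (hbpos i)) (ne_of_gt (hbpos (i + 1)))]
        _ ≤ g i := this
    have hlogs : Real.log (b i) - Real.log (b (i + 1))
        = c * Real.exp (τ * i) * (Real.exp τ - 1) := by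
      simp only [hb, Real.log_exp]
      push_cast
      rw [show τ * ((i : ℝ) + 1) = τ * i + τ by ring, Real.exp_add]
      ring
    have hρnn : 0 ≤ ρ (b (i + 1)) := hnn _ (hbpos _).le
    have hexp : Real.exp (τ * ((i : ℕ) + 1 : ℕ)) = Real.exp τ * Real.exp (τ * i) := by
      push_cast
      rw [show τ * ((i : ℝ) + 1) = τ * i + τ by ring, Real.exp_add]
      ring
    have h1 : K * (ρ (b (i + 1)) * (c * Real.exp (τ * i) * (Real.exp τ - 1)))
        = Real.exp τ * Real.exp (τ * i) * ρ (b (i + 1)) := by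
      have hd : c * (Real.exp τ - 1) ≠ 0 := by nlinarith
      have h2 : K * (c * (Real.exp τ - 1)) = Real.exp τ := by
        rw [hK]; exact div_mul_cancel₀ _ hd
      calc K * (ρ (b (i + 1)) * (c * Real.exp (τ * i) * (Real.exp τ - 1)))
          = (K * (c * (Real.exp τ - 1))) * (ρ (b (i + 1)) * Real.exp (τ * i)) := by ring
        _ = Real.exp τ * Real.exp (τ * i) * ρ (b (i + 1)) := by rw [h2]; ring
    calc Real.exp (τ * ((i : ℕ) + 1 : ℕ)) * ρ (b (i + 1))
        = K * (ρ (b (i + 1)) * (c * Real.exp (τ * i) * (Real.exp τ - 1))) := by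
          rw [h1, hexp]
      _ ≤ K * g i := by
          apply mul_le_mul_of_nonneg_left _ hKpos.le
          rw [← hlogs]
          exact hlow
  -- conclude
  rw [← summable_nat_add_iff 1]
  apply Summable.of_nonneg_of_le
  · intro i
    exact mul_nonneg (Real.exp_pos _).le (hnn _ (Real.exp_pos _).le)
  · intro i
    exact hkey i
  · exact hgsum.mul_left K
end
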